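/- arXiv:1907.00256 — 3 statements merged into one kernel-verified Lean document; each statement's English description precedes it below -/
import Mathlib

section
/- Let $T>0$, $m\ge 1$, $a,b>0$, and let $f:[0,T)\to[0,\infty)$ be locally essentially bounded (not necessarily continuous) and satisfy $f(t) \le a + b\int_0^t (f(s)+f(s)^m)\,ds$ for all $0<t<T$. Define $T_1>0$ by $b\,T_1\,((2a)+(2a)^m)=\tfrac{3}{4}a$. Then $f(t)\le 2a$ for all $t\in(0,\min(T,T_1))$. -/
open MeasureTheory Set

/-- Grönwall-type lemma for possibly discontinuous, locally essentially bounded functions. -/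
theorem gronwall_discontinuous (T m a b T1 : ℝ) (hT : 0 < T) (hm : 1 ≤ m)
    (ha : 0 < a) (hb : 0 < b)
    (f : ℝ → ℝ)
    (hf_nonneg : ∀ t ∈ Set.Ico (0:ℝ) T, 0 ≤ f t)
    (hf_locbdd : ∀ t ∈ Set.Ico (0:ℝ) T, ∃ M : ℝ, ∀ᵐ s ∂volume,
        s ∈ Set.Icc (0:ℝ) t → f s ≤ M)
    (hf_ineq : ∀ t : ℝ, 0 < t → t < T →
        f t ≤ a + b * ∫ s in (0:ℝ)..t, (f s + f s ^ m))
    (hT1 : b * T1 * ((2*a) + (2*a) ^ m) = 3/4 * a) :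
    ∀ t : ℝ, 0 < t → t < min T T1 → f t ≤ 2 * a := by
  intro t ht0 htmin
  have htT : t < T := htmin.trans_le (min_le_left _ _)
  have htT1 : t < T1 := htmin.trans_le (min_le_right _ _)
  obtain ⟨M, hM⟩ := hf_locbdd t ⟨ht0.le, htT⟩
  set K : ℝ := max M (2 * a) with hKdef
  have hK0 : 0 < K := lt_of_lt_of_le (by linarith) (le_max_right _ _)
  have hMK : M ≤ K := le_max_left _ _
  set C1 : ℝ := 2 * a + (2 * a) ^ m with hC1def
  set C2 : ℝ := K + K ^ m with hC2def
  have hC1 : 0 < C1 := by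
    have := Real.rpow_pos_of_pos (show (0:ℝ) < 2 * a by linarith) m
    rw [hC1def]; positivity
  have hC2 : 0 < C2 := by
    have := Real.rpow_pos_of_pos hK0 m
    rw [hC2def]; positivity
  clear_value C1 C2
  set g : ℝ → ℝ := fun s => f s + f s ^ m with hgdef
  clear_value K g
  -- key estimate
  have claim : ∀ u s : ℝ, 0 ≤ u → u ≤ s → s ≤ t → 0 < s →
      (∀ r, 0 < r → r < u → f r ≤ 2 * a) →
      f s ≤ a + b * (u * C1 + (s - u) * C2) := by
    intro u s hu hus hst hs hbelow
    have hsT : s < T := lt_of_le_of_lt hst htT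
    have hfs : f s ≤ a + b * ∫ x in (0:ℝ)..s, g x := hf_ineq s hs hsT
    have hpos : 0 ≤ u * C1 + (s - u) * C2 := by
      have h1 := mul_nonneg hu hC1.le
      have h2 := mul_nonneg (by linarith : (0:ℝ) ≤ s - u) hC2.le
      linarith
    by_cases hint : IntervalIntegrable g volume 0 s
    · have hmem1 : u ∈ Set.uIcc (0:ℝ) s := by
        rw [Set.uIcc_of_le (hu.trans hus)]; exact ⟨hu, hus⟩
      have hint1 : IntervalIntegrable g volume 0 u :=
        hint.mono_set (Set.uIcc_subset_uIcc Set.left_mem_uIcc hmem1)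
      have hint2 : IntervalIntegrable g volume u s :=
        hint.mono_set (Set.uIcc_subset_uIcc hmem1 Set.right_mem_uIcc)
      have hsplit : (∫ x in (0:ℝ)..u, g x) + ∫ x in u..s, g x = ∫ x in (0:ℝ)..s, g x :=
        intervalIntegral.integral_add_adjacent_intervals hint1 hint2
      have hnull : (volume : Measure ℝ) ({0, u} : Set ℝ) = 0 :=
        (Set.toFinite _).measure_zero volume
      have hae0 : ∀ᵐ r ∂(volume.restrict (Set.Icc (0:ℝ) u)), r ∉ ({0, u} : Set ℝ) :=
        ae_restrict_of_ae (compl_mem_ae_iff.mpr hnull)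
      have hb1 : (∫ x in (0:ℝ)..u, g x) ≤ u * C1 := by
        have hmono : (∫ x in (0:ℝ)..u, g x) ≤ ∫ _x in (0:ℝ)..u, C1 := by
          refine intervalIntegral.integral_mono_ae_restrict hu hint1
            intervalIntegrable_const ?_
          filter_upwards [ae_restrict_mem measurableSet_Icc, hae0] with r hr hr0
          have hrpos : 0 < r := lt_of_le_of_ne hr.1 (fun h => hr0 (by simp [← h]))
          have hru : r < u := lt_of_le_of_ne hr.2 (fun h => hr0 (by simp [h]))
          have hfr := hbelow r hrpos hru
          have hfr0 : 0 ≤ f r := hf_nonneg r ⟨hrpos.le, by linarith⟩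
          have hrp : f r ^ m ≤ (2 * a) ^ m :=
            Real.rpow_le_rpow hfr0 hfr (by linarith)
          simp only [hgdef]
          linarith
        rw [intervalIntegral.integral_const, sub_zero, smul_eq_mul] at hmono
        exact hmono
      have hb2 : (∫ x in u..s, g x) ≤ (s - u) * C2 := by
        have hmono : (∫ x in u..s, g x) ≤ ∫ _x in u..s, C2 := by
          refine intervalIntegral.integral_mono_ae_restrict hus hint2
            intervalIntegrable_const ?_
          filter_upwards [ae_restrict_mem measurableSet_Icc, ae_restrict_of_ae hM]
            with r hr hMr
          have hr0 : 0 ≤ r := hu.trans hr.1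
          have hrt : r ≤ t := hr.2.trans hst
          have hfr0 : 0 ≤ f r := hf_nonneg r ⟨hr0, by linarith⟩
          have hfrK : f r ≤ K := (hMr ⟨hr0, hrt⟩).trans hMK
          have hrp : f r ^ m ≤ K ^ m := Real.rpow_le_rpow hfr0 hfrK (by linarith)
          simp only [hgdef]
          linarith
        rw [intervalIntegral.integral_const, smul_eq_mul] at hmono
        exact hmono
      have hI : (∫ x in (0:ℝ)..s, g x) ≤ u * C1 + (s - u) * C2 := by
        rw [← hsplit]; linarith
      calc f s ≤ a + b * ∫ x in (0:ℝ)..s, g x := hfs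
        _ ≤ a + b * (u * C1 + (s - u) * C2) := by nlinarith
    · rw [intervalIntegral.integral_undef hint] at hfs
      nlinarith
  -- main argument
  set A : Set ℝ := {u | u ∈ Set.Icc 0 t ∧ ∀ r, 0 < r → r ≤ u → f r ≤ 2 * a} with hAdef
  have hA0 : (0:ℝ) ∈ A :=
    ⟨⟨le_rfl, ht0.le⟩, fun r hr hr' => absurd (hr.trans_le hr') (lt_irrefl _)⟩
  have hAne : A.Nonempty := ⟨0, hA0⟩
  have hAbdd : BddAbove A := ⟨t, fun u hu => hu.1.2⟩
  set u₀ := sSup A with hu0def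
  have hu0_0 : 0 ≤ u₀ := le_csSup hAbdd hA0
  have hu0t : u₀ ≤ t := csSup_le hAne (fun u hu => hu.1.2)
  have hbT1C1 : ∀ x : ℝ, x ≤ t → b * (x * C1) ≤ 3/4 * a := by
    intro x hx
    have hx1 : x * C1 ≤ T1 * C1 := mul_le_mul_of_nonneg_right (by linarith) hC1.le
    nlinarith [hT1]
  have hstep1 : ∀ r, 0 < r → r ≤ u₀ → f r ≤ 2 * a := by
    have hlt : ∀ r, 0 < r → r < u₀ → f r ≤ 2 * a := by
      intro r hr hru
      obtain ⟨v, hvA, hrv⟩ := exists_lt_of_lt_csSup hAne hru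
      exact hvA.2 r hr hrv.le
    intro r hr hru
    rcases eq_or_lt_of_le hru with heq | hlt'
    · have hcl := claim u₀ u₀ hu0_0 le_rfl hu0t (heq ▸ hr) hlt
      have hcl' : f u₀ ≤ a + b * (u₀ * C1) := by
        have : u₀ - u₀ = 0 := sub_self _
        rw [this, zero_mul, add_zero] at hcl
        exact hcl
      have h1 : b * (u₀ * C1) ≤ 3/4 * a := hbT1C1 u₀ hu0t
      rw [heq]
      linarith
    · exact hlt r hr hlt'
  have hu0eq : u₀ = t := by
    by_contra hne
    have hu0lt : u₀ < t := lt_of_le_of_ne hu0t hne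
    set δ := min (t - u₀) (a / (8 * (b * C2))) with hδdef
    have hδ1 : δ ≤ t - u₀ := min_le_left _ _
    have hδ2 : δ ≤ a / (8 * (b * C2)) := min_le_right _ _
    have hδ0 : 0 < δ := lt_min (by linarith) (by positivity)
    have hsA : u₀ + δ ∈ A := by
      refine ⟨⟨by linarith, by linarith⟩, ?_⟩
      intro r hr hru
      rcases le_or_gt r u₀ with h | h
      · exact hstep1 r hr h
      · have hrt : r ≤ t := by linarith
        have hcl := claim u₀ r hu0_0 h.le hrt hr
          (fun r' hr' hr'' => hstep1 r' hr' hr''.le)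
        have h1 := hbT1C1 u₀ hu0t
        have h2 : b * ((r - u₀) * C2) ≤ a / 8 := by
          have hrδ : r - u₀ ≤ δ := by linarith
          have hstep : (r - u₀) * (b * C2) ≤ (a / (8 * (b * C2))) * (b * C2) := by
            apply mul_le_mul_of_nonneg_right (by linarith) (by positivity)
          have hcancel : (a / (8 * (b * C2))) * (b * C2) = a / 8 := by
            field_simp
          rw [hcancel] at hstep
          linarith [hstep]
        have hdist := mul_add b (u₀ * C1) ((r - u₀) * C2)
        linarith
    have := le_csSup hAbdd hsA
    linarith
  exact hstep1 t ht0 hu0eq.symm.le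
end

section
/- Let $\lambda>1$ and suppose $u_0:\mathbb{R}^3\to\mathbb{R}^3$ is $\lambda$-discretely self-similar, i.e., $u_0(x)=\lambda u_0(\lambda x)$ for almost every $x$. Then $u_0\in M^{2,1}(\mathbb{R}^3)$ if and only if $u_0\in L^2_{\mathrm{uloc}}(\mathbb{R}^3)$, and in that case $\|u_0\|_{L^2_{\mathrm{uloc}}} \le \|u_0\|_{M^{2,1}} \le \sqrt{\lambda}\,\|u_0\|_{L^2_{\mathrm{uloc}}}$. -/
open MeasureTheory Set ENNReal

/-- The square of the `L²_uloc` norm on `ℝ³`. -/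
noncomputable def L2ulocSq (f : EuclideanSpace ℝ (Fin 3) → EuclideanSpace ℝ (Fin 3)) : ℝ≥0∞ :=
  ⨆ x0 : EuclideanSpace ℝ (Fin 3),
    ∫⁻ x in Metric.ball x0 1, (‖f x‖₊ : ℝ≥0∞) ^ 2

/-- The square of the Morrey `M^{2,1}` norm on `ℝ³`. -/
noncomputable def M21sq (f : EuclideanSpace ℝ (Fin 3) → EuclideanSpace ℝ (Fin 3)) : ℝ≥0∞ :=
  ⨆ x0, ⨆ R ∈ Set.Ioi (0:ℝ),
    (ENNReal.ofReal R)⁻¹ * ∫⁻ x in Metric.ball x0 R, (‖f x‖₊ : ℝ≥0∞) ^ 2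

section Aux

variable {lam : ℝ} {u0 : EuclideanSpace ℝ (Fin 3) → EuclideanSpace ℝ (Fin 3)}

/-- One-step scaling identity for the Morrey quotient. -/
lemma dss_step (hlam : 1 < lam)
    (hdss : ∀ᵐ x ∂volume, u0 x = lam • u0 (lam • x))
    (x0 : EuclideanSpace ℝ (Fin 3)) {R : ℝ} (hR : 0 < R) :
    (ENNReal.ofReal R)⁻¹ * ∫⁻ x in Metric.ball x0 R, (‖u0 x‖₊ : ℝ≥0∞) ^ 2
      = (ENNReal.ofReal (lam * R))⁻¹ *
        ∫⁻ x in Metric.ball (lam • x0) (lam * R), (‖u0 x‖₊ : ℝ≥0∞) ^ 2 := by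
  have hlam0 : (0:ℝ) < lam := lt_trans one_pos hlam
  have hne : lam ≠ 0 := ne_of_gt hlam0
  -- a.e. pointwise identity for the squared norm
  have hae : ∀ᵐ x ∂(volume.restrict (Metric.ball x0 R)),
      (‖u0 x‖₊ : ℝ≥0∞) ^ 2 = ENNReal.ofReal (lam ^ 2) * (‖u0 (lam • x)‖₊ : ℝ≥0∞) ^ 2 := by
    refine ae_restrict_of_ae (hdss.mono fun x hx => ?_)
    rw [hx]
    have : (‖lam • u0 (lam • x)‖₊ : ℝ≥0∞) = ENNReal.ofReal lam * (‖u0 (lam • x)‖₊ : ℝ≥0∞) := by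
      rw [nnnorm_smul]
      push_cast
      rw [← enorm_eq_nnnorm lam, Real.enorm_eq_ofReal hlam0.le]
    rw [this, mul_pow, ← ENNReal.ofReal_pow hlam0.le]
  have h1 : ∫⁻ x in Metric.ball x0 R, (‖u0 x‖₊ : ℝ≥0∞) ^ 2
      = ENNReal.ofReal (lam ^ 2) * ∫⁻ x in Metric.ball x0 R, (‖u0 (lam • x)‖₊ : ℝ≥0∞) ^ 2 := by
    rw [lintegral_congr_ae hae, lintegral_const_mul' _ _ ENNReal.ofReal_ne_top]
  -- change of variables
  let e : EuclideanSpace ℝ (Fin 3) ≃ᵐ EuclideanSpace ℝ (Fin 3) :=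
    (Homeomorph.smul (Units.mk0 lam hne)).toMeasurableEquiv
  have hpre : (fun x : EuclideanSpace ℝ (Fin 3) => lam • x) ⁻¹' Metric.ball (lam • x0) (lam * R)
      = Metric.ball x0 R := by
    ext x
    simp only [mem_preimage, Metric.mem_ball, dist_eq_norm, ← smul_sub, norm_smul,
      Real.norm_eq_abs, abs_of_pos hlam0]
    exact mul_lt_mul_iff_right₀ hlam0
  have hmap : Measure.map (fun x : EuclideanSpace ℝ (Fin 3) => lam • x) volume
      = ENNReal.ofReal (abs (lam ^ Module.finrank ℝ (EuclideanSpace ℝ (Fin 3)))⁻¹) • volume :=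
    Measure.map_addHaar_smul volume hne
  have hcv : ∫⁻ x in Metric.ball x0 R, (‖u0 (lam • x)‖₊ : ℝ≥0∞) ^ 2
      = ENNReal.ofReal ((lam ^ 3)⁻¹) *
        ∫⁻ x in Metric.ball (lam • x0) (lam * R), (‖u0 x‖₊ : ℝ≥0∞) ^ 2 := by
    have hmeas : Measurable (fun x : EuclideanSpace ℝ (Fin 3) => lam • x) :=
      (continuous_const_smul lam).measurable
    have hcoe : ⇑e = fun x : EuclideanSpace ℝ (Fin 3) => lam • x := funext fun _ => rfl
    have key := lintegral_map_equiv (μ := volume.restrict (Metric.ball x0 R))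
      (fun x => (‖u0 x‖₊ : ℝ≥0∞) ^ 2) e
    rw [hcoe] at key
    have hmape : Measure.map (fun x : EuclideanSpace ℝ (Fin 3) => lam • x)
          (volume.restrict (Metric.ball x0 R))
        = ENNReal.ofReal ((lam ^ 3)⁻¹) •
          volume.restrict (Metric.ball (lam • x0) (lam * R)) := by
      rw [← hpre, ← Measure.restrict_map hmeas measurableSet_ball, hmap,
        finrank_euclideanSpace_fin, Measure.restrict_smul, abs_of_pos (by positivity)]
    rw [hmape, lintegral_smul_measure] at key
    exact key.symm
  rw [h1, hcv, ← mul_assoc, ← mul_assoc]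
  congr 1
  have hval : lam ^ 2 * (lam ^ 3)⁻¹ = lam⁻¹ := by
    field_simp
  calc (ENNReal.ofReal R)⁻¹ * ENNReal.ofReal (lam ^ 2) * ENNReal.ofReal ((lam ^ 3)⁻¹)
      = (ENNReal.ofReal R)⁻¹ * (ENNReal.ofReal (lam ^ 2) * ENNReal.ofReal ((lam ^ 3)⁻¹)) := by
        ring
    _ = (ENNReal.ofReal R)⁻¹ * (ENNReal.ofReal lam)⁻¹ := by
        rw [← ENNReal.ofReal_mul (by positivity), hval, ENNReal.ofReal_inv_of_pos hlam0]
    _ = (ENNReal.ofReal (lam * R))⁻¹ := by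
        rw [ENNReal.ofReal_mul hlam0.le, ENNReal.mul_inv
          (Or.inl (by simp [hlam0])) (Or.inl ENNReal.ofReal_ne_top), mul_comm]

/-- Iterated scaling identity. -/
lemma dss_zpow (hlam : 1 < lam)
    (hdss : ∀ᵐ x ∂volume, u0 x = lam • u0 (lam • x))
    (x0 : EuclideanSpace ℝ (Fin 3)) {R : ℝ} (hR : 0 < R) (k : ℤ) :
    (ENNReal.ofReal R)⁻¹ * ∫⁻ x in Metric.ball x0 R, (‖u0 x‖₊ : ℝ≥0∞) ^ 2
      = (ENNReal.ofReal (lam ^ k * R))⁻¹ *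
        ∫⁻ x in Metric.ball ((lam ^ k) • x0) (lam ^ k * R), (‖u0 x‖₊ : ℝ≥0∞) ^ 2 := by
  have hlam0 : (0:ℝ) < lam := lt_trans one_pos hlam
  induction k using Int.induction_on with
  | zero => simp
  | succ n ih =>
      have hpos : 0 < lam ^ (n:ℤ) * R := by positivity
      rw [ih, dss_step hlam hdss _ hpos]
      have hmul : lam * lam ^ (n:ℤ) = lam ^ ((n:ℤ)+1) := by
        rw [zpow_add_one₀ (ne_of_gt hlam0), mul_comm]
      have h1 : lam * (lam ^ (n:ℤ) * R) = lam ^ ((n:ℤ)+1) * R := by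
        rw [← mul_assoc, hmul]
      have h2 : lam • ((lam ^ (n:ℤ)) • x0) = (lam ^ ((n:ℤ)+1)) • x0 := by
        rw [smul_smul, hmul]
      rw [h1, h2]
  | pred n ih =>
      have hpos : 0 < lam ^ (-(n:ℤ)-1) * R := by positivity
      rw [ih, dss_step hlam hdss ((lam ^ (-(n:ℤ)-1)) • x0) hpos]
      have hmul : lam * lam ^ (-(n:ℤ)-1) = lam ^ (-(n:ℤ)) := by
        rw [mul_comm, ← zpow_add_one₀ (ne_of_gt hlam0)]
        congr 1
        ring
      have h1 : lam * (lam ^ (-(n:ℤ)-1) * R) = lam ^ (-(n:ℤ)) * R := by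
        rw [← mul_assoc, hmul]
      have h2 : lam • ((lam ^ (-(n:ℤ)-1)) • x0) = (lam ^ (-(n:ℤ))) • x0 := by
        rw [smul_smul, hmul]
      rw [h1, h2]

end Aux

/-- For a `λ`-discretely self-similar `u₀` on `ℝ³`, `u₀ ∈ M^{2,1}` iff `u₀ ∈ L²_uloc`,
with `‖u₀‖_{L²_uloc} ≤ ‖u₀‖_{M^{2,1}} ≤ √λ ‖u₀‖_{L²_uloc}` (stated with squared norms). -/
theorem dss_M21_iff_L2uloc (lam : ℝ) (hlam : 1 < lam)
    (u0 : EuclideanSpace ℝ (Fin 3) → EuclideanSpace ℝ (Fin 3))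
    (hdss : ∀ᵐ x ∂volume, u0 x = lam • u0 (lam • x)) :
    (M21sq u0 < ⊤ ↔ L2ulocSq u0 < ⊤) ∧
    L2ulocSq u0 ≤ M21sq u0 ∧
    M21sq u0 ≤ ENNReal.ofReal lam * L2ulocSq u0 := by
  have hlam0 : (0:ℝ) < lam := lt_trans one_pos hlam
  have hle1 : L2ulocSq u0 ≤ M21sq u0 := by
    refine iSup_le fun x0 => ?_
    have : ∫⁻ x in Metric.ball x0 1, (‖u0 x‖₊ : ℝ≥0∞) ^ 2
        = (ENNReal.ofReal 1)⁻¹ * ∫⁻ x in Metric.ball x0 1, (‖u0 x‖₊ : ℝ≥0∞) ^ 2 := by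
      simp
    rw [this]
    exact le_iSup_of_le x0 (le_iSup_of_le 1 (le_iSup_of_le (by norm_num : (1:ℝ) ∈ Set.Ioi 0)
      le_rfl))
  have hle2 : M21sq u0 ≤ ENNReal.ofReal lam * L2ulocSq u0 := by
    refine iSup_le fun x0 => iSup_le fun R => iSup_le fun hR => ?_
    have hRpos : (0:ℝ) < R := hR
    set k : ℤ := ⌈Real.logb lam R⌉ with hk
    have hlamne1 : lam ≠ 1 := ne_of_gt hlam
    have hRle : R ≤ lam ^ k := by
      have h1 : R = lam ^ Real.logb lam R := (Real.rpow_logb hlam0 hlamne1 hRpos).symm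
      calc R = lam ^ Real.logb lam R := h1
        _ ≤ lam ^ ((k:ℤ):ℝ) := by
            exact Real.rpow_le_rpow_of_exponent_le hlam.le (Int.le_ceil _)
        _ = lam ^ k := by rw [Real.rpow_intCast]
    have hRgt : lam ^ (k-1) < R := by
      have h1 : R = lam ^ Real.logb lam R := (Real.rpow_logb hlam0 hlamne1 hRpos).symm
      calc lam ^ (k-1) = lam ^ (((k:ℤ)-1:ℤ):ℝ) := by rw [Real.rpow_intCast]
        _ < lam ^ Real.logb lam R := by
            apply Real.rpow_lt_rpow_of_exponent_lt hlam
            push_cast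
            linarith [Int.ceil_lt_add_one (Real.logb lam R)]
        _ = R := h1.symm
    set s : ℝ := lam ^ (-k) * R with hs
    have hspos : (0:ℝ) < s := by positivity
    have hsle : s ≤ 1 := by
      rw [hs]
      have : lam ^ (-k) * R ≤ lam ^ (-k) * lam ^ k :=
        mul_le_mul_of_nonneg_left hRle (by positivity)
      calc lam ^ (-k) * R ≤ lam ^ (-k) * lam ^ k := this
        _ = 1 := by rw [← zpow_add₀ (ne_of_gt hlam0)]; simp
    have hsgt : lam⁻¹ ≤ s := by
      rw [hs]
      have : lam ^ (-k) * lam ^ (k-1) ≤ lam ^ (-k) * R :=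
        mul_le_mul_of_nonneg_left hRgt.le (by positivity)
      calc lam⁻¹ = lam ^ (-k) * lam ^ (k-1) := by
            rw [← zpow_add₀ (ne_of_gt hlam0), show (-k) + (k-1) = (-1:ℤ) by ring,
              zpow_neg_one]
        _ ≤ lam ^ (-k) * R := this
    have key := dss_zpow hlam hdss x0 hRpos (-k)
    rw [← hs] at key
    calc (ENNReal.ofReal R)⁻¹ * ∫⁻ x in Metric.ball x0 R, (‖u0 x‖₊ : ℝ≥0∞) ^ 2
        = (ENNReal.ofReal s)⁻¹ *
          ∫⁻ x in Metric.ball ((lam ^ (-k)) • x0) s, (‖u0 x‖₊ : ℝ≥0∞) ^ 2 := key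
      _ ≤ ENNReal.ofReal lam *
          ∫⁻ x in Metric.ball ((lam ^ (-k)) • x0) 1, (‖u0 x‖₊ : ℝ≥0∞) ^ 2 := by
          apply mul_le_mul'
          · have h1 : ENNReal.ofReal lam⁻¹ ≤ ENNReal.ofReal s := ENNReal.ofReal_le_ofReal hsgt
            have h2 : (ENNReal.ofReal s)⁻¹ ≤ (ENNReal.ofReal lam⁻¹)⁻¹ :=
              ENNReal.inv_le_inv' h1
            rwa [ENNReal.ofReal_inv_of_pos hlam0, inv_inv] at h2
          · exact lintegral_mono_set (Metric.ball_subset_ball hsle)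
      _ ≤ ENNReal.ofReal lam * L2ulocSq u0 :=
          mul_le_mul' le_rfl (le_iSup (fun y0 =>
            ∫⁻ x in Metric.ball y0 1, (‖u0 x‖₊ : ℝ≥0∞) ^ 2) _)
  refine ⟨⟨fun h => lt_of_le_of_lt hle1 h, fun h => lt_of_le_of_lt hle2 ?_⟩, hle1, hle2⟩
  exact ENNReal.mul_lt_top ENNReal.ofReal_lt_top h
end

section
/- Let $\lambda>1$, $1+r<|x_0|<\lambda-r$, and let $f(x)=\sum_{k\in\mathbb{Z}}\lambda^k f_0(\lambda^k x)$ with $f_0(x)=|x-x_0|^{-1}\chi_{B_r(0)}(x-x_0)$. Then $f\notin L^{3,\infty}(B_1(0))$: indeed, setting $\sigma_l=\lambda^l/r$ and $E_{\sigma_l}=\{x\in B_1: |f(x)|>\sigma_l\}$, one has $|E_{\sigma_l}|\ge C\,l\,\lambda^{-3l}$ for all $l\in\mathbb{N}$, so $\sup_{\sigma>0}\sigma|\{x\in B_1:|f|>\sigma\}|^{1/3}\ge C\, l^{1/3}\to\infty$. -/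
open MeasureTheory Set ENNReal

/-- The bump `f₀(x) = |x-x₀|⁻¹ χ_{B_r(0)}(x-x₀)`. -/
noncomputable def bump (x0 : EuclideanSpace ℝ (Fin 3)) (r : ℝ)
    (x : EuclideanSpace ℝ (Fin 3)) : ℝ :=
  if ‖x - x0‖ < r then ‖x - x0‖⁻¹ else 0

/-- The λ-DSS function `f(x) = ∑_{k∈ℤ} λ^k f₀(λ^k x)`. -/
noncomputable def fdss (lam : ℝ) (x0 : EuclideanSpace ℝ (Fin 3)) (r : ℝ)
    (x : EuclideanSpace ℝ (Fin 3)) : ℝ :=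
  ∑' k : ℤ, lam ^ k * bump x0 r ((lam ^ k) • x)

lemma two_scales (lam r : ℝ) (x0 : EuclideanSpace ℝ (Fin 3))
    (hlam : 1 < lam) (hr : 0 < r) (h1 : 1 + r < ‖x0‖) (h2 : ‖x0‖ < lam - r)
    {x : EuclideanSpace ℝ (Fin 3)} {j k : ℤ}
    (hj : ‖(lam ^ j) • x - x0‖ < r) (hk : ‖(lam ^ k) • x - x0‖ < r) : j = k := by
  have hl0 : (0:ℝ) < lam := lt_trans one_pos hlam
  have key : ∀ m : ℤ, ‖(lam ^ m) • x - x0‖ < r →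
      1 < lam ^ m * ‖x‖ ∧ lam ^ m * ‖x‖ < lam := by
    intro m hm
    have hn : ‖(lam ^ m) • x‖ = lam ^ m * ‖x‖ := by
      rw [norm_smul, Real.norm_eq_abs, abs_of_pos (zpow_pos hl0 m)]
    have hlow : ‖x0‖ - r < ‖(lam ^ m) • x‖ := by
      have := norm_sub_norm_le x0 ((lam ^ m) • x)
      have h' : ‖x0 - (lam ^ m) • x‖ < r := by rwa [norm_sub_rev]
      linarith
    have hhigh : ‖(lam ^ m) • x‖ < r + ‖x0‖ := by
      have := norm_sub_norm_le ((lam ^ m) • x) x0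
      linarith
    rw [hn] at hlow hhigh
    constructor <;> linarith
  obtain ⟨hj1, hj2⟩ := key j hj
  obtain ⟨hk1, hk2⟩ := key k hk
  by_contra hne
  have aux : ∀ a b : ℤ, a < b → 1 < lam ^ a * ‖x‖ → lam ^ b * ‖x‖ < lam → False := by
    intro a b hab ha hb
    have h1' : lam ≤ lam ^ (b - a) := by
      calc lam = lam ^ (1:ℤ) := (zpow_one lam).symm
      _ ≤ lam ^ (b - a) := zpow_le_zpow_right₀ hlam.le (by omega)
    have h2' : lam ^ b = lam ^ (b - a) * lam ^ a := by
      rw [← zpow_add₀ (ne_of_gt hl0)]; ring_nf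
    have hx0 : 0 < ‖x‖ := by
      by_contra hxx
      push_neg at hxx
      have : ‖x‖ = 0 := le_antisymm hxx (norm_nonneg x)
      rw [this, mul_zero] at ha; linarith
    nlinarith [zpow_pos hl0 a, zpow_pos hl0 (b-a)]
  rcases lt_or_gt_of_ne hne with h | h
  · exact aux j k h hj1 hk2
  · exact aux k j h hk1 hj2

lemma fdss_eq (lam r : ℝ) (x0 : EuclideanSpace ℝ (Fin 3))
    (hlam : 1 < lam) (hr : 0 < r) (h1 : 1 + r < ‖x0‖) (h2 : ‖x0‖ < lam - r)
    {x : EuclideanSpace ℝ (Fin 3)} {k : ℤ}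
    (hk : ‖(lam ^ k) • x - x0‖ < r) :
    fdss lam x0 r x = lam ^ k * ‖(lam ^ k) • x - x0‖⁻¹ := by
  unfold fdss
  rw [tsum_eq_single k]
  · unfold bump; rw [if_pos hk]
  · intro j hjk
    have hnj : ¬ (‖(lam ^ j) • x - x0‖ < r) := fun h =>
      hjk (two_scales lam r x0 hlam hr h1 h2 h hk)
    unfold bump; rw [if_neg hnj, mul_zero]

lemma scaled_norm (lam : ℝ) (x0 : EuclideanSpace ℝ (Fin 3)) (hl0 : 0 < lam)
    (k : ℤ) (x : EuclideanSpace ℝ (Fin 3)) :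
    ‖(lam ^ k) • x - x0‖ = lam ^ k * ‖x - (lam ^ (-k)) • x0‖ := by
  have h : (lam ^ k) • (x - (lam ^ (-k)) • x0) = (lam ^ k) • x - x0 := by
    rw [smul_sub, smul_smul, ← zpow_add₀ (ne_of_gt hl0)]
    simp
  rw [← h, norm_smul, Real.norm_eq_abs, abs_of_pos (zpow_pos hl0 k)]

lemma part1 (lam r : ℝ) (x0 : EuclideanSpace ℝ (Fin 3))
    (hlam : 1 < lam) (hr : 0 < r) (h1 : 1 + r < ‖x0‖) (h2 : ‖x0‖ < lam - r)
    (l : ℕ) (hl : 1 ≤ l) :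
    ENNReal.ofReal (((volume (Metric.ball (0 : EuclideanSpace ℝ (Fin 3)) 1)).toReal * r ^ 3)
        * l * lam ^ (-(3 * (l:ℤ)))) ≤
      volume {x ∈ Metric.ball (0 : EuclideanSpace ℝ (Fin 3)) 1 |
        lam ^ l / r < |fdss lam x0 r x|} := by
  have hl0 : (0:ℝ) < lam := lt_trans one_pos hlam
  set v := volume (Metric.ball (0 : EuclideanSpace ℝ (Fin 3)) 1) with hv
  set ρ : ℝ := r * lam ^ (-(l:ℤ)) with hρ
  have hρpos : 0 < ρ := mul_pos hr (zpow_pos hl0 _)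
  set c : ℕ → EuclideanSpace ℝ (Fin 3) := fun k => (lam ^ (-(k:ℤ))) • x0 with hc
  set S : ℕ → Set (EuclideanSpace ℝ (Fin 3)) := fun k => Metric.ball (c k) ρ \ {c k} with hS
  -- dist within ball with index k ∈ [1,l] gives the key smallness
  have hsmall : ∀ k ∈ Finset.Icc 1 l, ∀ x ∈ S k,
      ‖(lam ^ (k:ℤ)) • x - x0‖ < r ∧
      ‖(lam ^ (k:ℤ)) • x - x0‖ = lam ^ (k:ℤ) * ‖x - c k‖ := by
    intro k hk x hx
    simp only [Finset.mem_Icc] at hk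
    obtain ⟨hxb, _⟩ := hx
    rw [Metric.mem_ball, dist_eq_norm] at hxb
    have heq := scaled_norm lam x0 hl0 (k:ℤ) x
    refine ⟨?_, heq⟩
    rw [heq]
    have hmono : lam ^ (-(l:ℤ)) ≤ lam ^ (-(k:ℤ)) :=
      zpow_le_zpow_right₀ hlam.le (by omega)
    have hkpos : (0:ℝ) < lam ^ (k:ℤ) := zpow_pos hl0 _
    have : ‖x - c k‖ < r * lam ^ (-(k:ℤ)) :=
      lt_of_lt_of_le hxb (by exact mul_le_mul_of_nonneg_left hmono hr.le)
    have hcan : lam ^ (k:ℤ) * (r * lam ^ (-(k:ℤ))) = r := by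
      rw [mul_comm r, ← mul_assoc, ← zpow_add₀ (ne_of_gt hl0)]
      simp
    calc lam ^ (k:ℤ) * ‖x - c k‖ < lam ^ (k:ℤ) * (r * lam ^ (-(k:ℤ))) := by
          exact mul_lt_mul_of_pos_left this hkpos
      _ = r := hcan
  -- each S k is inside the superlevel set
  have hsub : ∀ k ∈ Finset.Icc 1 l, S k ⊆
      {x ∈ Metric.ball (0 : EuclideanSpace ℝ (Fin 3)) 1 | lam ^ l / r < |fdss lam x0 r x|} := by
    intro k hk x hx
    obtain ⟨hlt, heq⟩ := hsmall k hk x hx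
    simp only [Finset.mem_Icc] at hk
    obtain ⟨hxb, hxc⟩ := hx
    rw [Metric.mem_ball, dist_eq_norm] at hxb
    have hd0 : 0 < ‖x - c k‖ := by
      rw [norm_pos_iff, sub_ne_zero]
      exact fun h => hxc (by simp [h])
    -- fdss value
    have hf : fdss lam x0 r x = ‖x - c k‖⁻¹ := by
      rw [fdss_eq lam r x0 hlam hr h1 h2 hlt, heq, mul_inv,← mul_assoc,
        mul_inv_cancel₀ (ne_of_gt (zpow_pos hl0 _)), one_mul]
    constructor
    · -- x ∈ ball 0 1
      rw [Metric.mem_ball, dist_zero_right]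
      have hck : ‖c k‖ = lam ^ (-(k:ℤ)) * ‖x0‖ := by
        rw [hc, norm_smul, Real.norm_eq_abs, abs_of_pos (zpow_pos hl0 _)]
      have htr : ‖x‖ ≤ ‖x - c k‖ + ‖c k‖ := by
        have := norm_add_le (x - c k) (c k); simpa using this
      have hmono : lam ^ (-(l:ℤ)) ≤ lam ^ (-(k:ℤ)) :=
        zpow_le_zpow_right₀ hlam.le (by omega)
      have hkpos : (0:ℝ) < lam ^ (-(k:ℤ)) := zpow_pos hl0 _
      have hone : lam ^ (-(k:ℤ)) * lam ≤ 1 := by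
        have : lam ^ (-(k:ℤ)) * lam = lam ^ (1 - (k:ℤ)) := by
          rw [show (1 - (k:ℤ)) = -(k:ℤ) + 1 by ring, zpow_add₀ (ne_of_gt hl0), zpow_one]
        rw [this]
        calc lam ^ (1 - (k:ℤ)) ≤ lam ^ (0:ℤ) :=
              zpow_le_zpow_right₀ hlam.le (by omega)
          _ = 1 := zpow_zero lam
      nlinarith [hck, hxb, hρpos, mul_le_mul_of_nonneg_left hmono hr.le]
    · -- superlevel
      rw [hf]
      have habs : ‖x - c k‖⁻¹ ≤ |‖x - c k‖⁻¹| := le_abs_self _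
      refine lt_of_lt_of_le ?_ habs
      have hσρ : lam ^ l / r = ρ⁻¹ := by
        rw [hρ, mul_inv, zpow_neg, inv_inv, zpow_natCast, div_eq_mul_inv, mul_comm]
      rw [hσρ]
      exact inv_strictAnti₀ hd0 hxb
  -- disjointness
  have hdisj : (↑(Finset.Icc 1 l) : Set ℕ).PairwiseDisjoint S := by
    intro j hj k hk hjk
    simp only [Finset.coe_Icc, mem_Icc] at hj hk
    rw [Function.onFun, Set.disjoint_left]
    intro x hxj hxk
    have hj' := (hsmall j (Finset.mem_Icc.mpr hj) x hxj).1
    have hk' := (hsmall k (Finset.mem_Icc.mpr hk) x hxk).1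
    exact hjk (by exact_mod_cast two_scales lam r x0 hlam hr h1 h2 hj' hk')
  -- volume of each piece
  have hvol : ∀ k ∈ Finset.Icc 1 l, volume (S k) = ENNReal.ofReal (ρ ^ 3) * v := by
    intro k _
    rw [hS]
    simp only
    rw [measure_diff_null (measure_singleton _), Measure.addHaar_ball volume _ hρpos.le,
      finrank_euclideanSpace_fin]
  -- put together
  have hunion : volume (⋃ k ∈ Finset.Icc 1 l, S k) = l * (ENNReal.ofReal (ρ ^ 3) * v) := by
    rw [measure_biUnion_finset hdisj (fun k _ => ((Metric.isOpen_ball).measurableSet).diff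
      (measurableSet_singleton _))]
    rw [Finset.sum_congr rfl hvol, Finset.sum_const, Nat.card_Icc]
    simp [nsmul_eq_mul]
  have hmono2 : volume (⋃ k ∈ Finset.Icc 1 l, S k) ≤
      volume {x ∈ Metric.ball (0 : EuclideanSpace ℝ (Fin 3)) 1 |
        lam ^ l / r < |fdss lam x0 r x|} :=
    measure_mono (Set.iUnion₂_subset hsub)
  refine le_trans ?_ (le_trans (le_of_eq hunion.symm) hmono2)
  -- arithmetic
  have hvne : v ≠ ⊤ := (measure_ball_lt_top).ne
  have hρ3 : ρ ^ 3 = r ^ 3 * lam ^ (-(3 * (l:ℤ))) := by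
    rw [hρ, mul_pow, ← zpow_natCast (lam ^ (-(l:ℤ))) 3, ← zpow_mul,
      show ((-(l:ℤ)) * ((3:ℕ):ℤ)) = -(3*(l:ℤ)) by push_cast; ring]
  have : v.toReal * r ^ 3 * l * lam ^ (-(3 * (l:ℤ))) = v.toReal * ((l:ℝ) * ρ ^ 3) := by
    rw [hρ3]; ring
  rw [this, ENNReal.ofReal_mul ENNReal.toReal_nonneg, ENNReal.ofReal_toReal hvne,
    ENNReal.ofReal_mul (Nat.cast_nonneg l), ENNReal.ofReal_natCast]
  ring_nf
  exact le_refl _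

/-- The DSS example is not in `L^{3,∞}(B₁)`: for `σ_l = λ^l / r` the superlevel sets
satisfy `|E_{σ_l}| ≥ C l λ^{-3l}`, whence the weak `L³` quasinorm on `B₁` is infinite. -/
theorem dss_not_weakL3_on_ball (lam r : ℝ) (x0 : EuclideanSpace ℝ (Fin 3))
    (hlam : 1 < lam) (hr : 0 < r) (h1 : 1 + r < ‖x0‖) (h2 : ‖x0‖ < lam - r) :
    (∃ C : ℝ, 0 < C ∧ ∀ l : ℕ, 1 ≤ l →
      ENNReal.ofReal (C * l * lam ^ (-(3 * (l:ℤ)))) ≤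
        volume {x ∈ Metric.ball (0 : EuclideanSpace ℝ (Fin 3)) 1 |
          lam ^ l / r < |fdss lam x0 r x|}) ∧
    (⨆ σ ∈ Set.Ioi (0:ℝ), ENNReal.ofReal σ *
        (volume {x ∈ Metric.ball (0 : EuclideanSpace ℝ (Fin 3)) 1 |
          σ < |fdss lam x0 r x|}) ^ (1/3 : ℝ)) = ⊤ := by
  have hl0 : (0:ℝ) < lam := lt_trans one_pos hlam
  set v := volume (Metric.ball (0 : EuclideanSpace ℝ (Fin 3)) 1) with hv
  have hvpos : 0 < v.toReal :=
    ENNReal.toReal_pos (Metric.measure_ball_pos volume 0 one_pos).ne' measure_ball_lt_top.ne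
  set C : ℝ := v.toReal * r ^ 3 with hCdef
  have hCpos : 0 < C := mul_pos hvpos (pow_pos hr 3)
  have hpart1 : ∀ l : ℕ, 1 ≤ l →
      ENNReal.ofReal (C * l * lam ^ (-(3 * (l:ℤ)))) ≤
        volume {x ∈ Metric.ball (0 : EuclideanSpace ℝ (Fin 3)) 1 |
          lam ^ l / r < |fdss lam x0 r x|} :=
    fun l hl => part1 lam r x0 hlam hr h1 h2 l hl
  refine ⟨⟨C, hCpos, hpart1⟩, ?_⟩
  by_contra hS
  obtain ⟨n, hn⟩ := ENNReal.exists_nat_gt hS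
  set l : ℕ := max 1 ⌈((n:ℝ) * r) ^ 3 / C⌉₊ with hldef
  have hl1 : 1 ≤ l := le_max_left _ _
  have hlge : ((n:ℝ) * r) ^ 3 / C ≤ (l:ℝ) :=
    le_trans (Nat.le_ceil _) (by exact_mod_cast Nat.le_max_right 1 _)
  have hlpos : (0:ℝ) < l := by exact_mod_cast hl1
  have hCl : ((n:ℝ) * r) ^ 3 ≤ C * l := by
    rw [div_le_iff₀ hCpos] at hlge; linarith
  set σ : ℝ := lam ^ l / r with hσdef
  have hσpos : 0 < σ := div_pos (pow_pos hl0 l) hr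
  set A : ℝ := C * l * lam ^ (-(3 * (l:ℤ))) with hAdef
  have hApos : 0 < A := by positivity
  set t : ℝ := lam ^ (-(l:ℤ)) with htdef
  have htpos : 0 < t := zpow_pos hl0 _
  have h3 : lam ^ (-(3 * (l:ℤ))) = t ^ (3:ℕ) := by
    rw [htdef, ← zpow_natCast (lam ^ (-(l:ℤ))) 3, ← zpow_mul,
      show ((-(l:ℤ)) * ((3:ℕ):ℤ)) = -(3*(l:ℤ)) by push_cast; ring]
  have hcube : ∀ s : ℝ, 0 ≤ s → ((s ^ (3:ℕ)) : ℝ) ^ ((1:ℝ)/3) = s := by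
    intro s hs
    rw [← Real.rpow_natCast s 3, ← Real.rpow_mul hs]
    norm_num
  have hA13 : A ^ ((1:ℝ)/3) = (C * l) ^ ((1:ℝ)/3) * t := by
    rw [hAdef, h3, Real.mul_rpow (by positivity) (by positivity), hcube t htpos.le]
  have hcancel : lam ^ l * t = 1 := by
    rw [htdef, ← zpow_natCast lam l, ← zpow_add₀ (ne_of_gt hl0)]
    simp
  have hkey : (n:ℝ) ≤ σ * A ^ ((1:ℝ)/3) := by
    have hmono : ((n:ℝ) * r) ≤ (C * l) ^ ((1:ℝ)/3) := by
      have := Real.rpow_le_rpow (by positivity) hCl (by norm_num : (0:ℝ) ≤ 1/3)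
      rwa [hcube ((n:ℝ)*r) (by positivity)] at this
    have : σ * A ^ ((1:ℝ)/3) = (C * l) ^ ((1:ℝ)/3) / r := by
      rw [hA13, hσdef, div_mul_eq_mul_div,
        show lam ^ l * ((C * (l:ℝ)) ^ ((1:ℝ)/3) * t)
          = (C * (l:ℝ)) ^ ((1:ℝ)/3) * (lam ^ l * t) by ring, hcancel, mul_one]
    rw [this, le_div_iff₀ hr]
    linarith
  have hterm : (n : ℝ≥0∞) ≤ ENNReal.ofReal σ *
      (volume {x ∈ Metric.ball (0 : EuclideanSpace ℝ (Fin 3)) 1 |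
        σ < |fdss lam x0 r x|}) ^ (1/3 : ℝ) := by
    calc (n : ℝ≥0∞) = ENNReal.ofReal ((n:ℝ)) := by
          rw [ENNReal.ofReal_natCast]
      _ ≤ ENNReal.ofReal (σ * A ^ ((1:ℝ)/3)) := ENNReal.ofReal_le_ofReal hkey
      _ = ENNReal.ofReal σ * ENNReal.ofReal (A ^ ((1:ℝ)/3)) :=
          ENNReal.ofReal_mul hσpos.le
      _ = ENNReal.ofReal σ * (ENNReal.ofReal A) ^ ((1:ℝ)/3) := by
          rw [ENNReal.ofReal_rpow_of_pos hApos]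
      _ ≤ ENNReal.ofReal σ *
          (volume {x ∈ Metric.ball (0 : EuclideanSpace ℝ (Fin 3)) 1 |
            σ < |fdss lam x0 r x|}) ^ (1/3 : ℝ) := by
          refine mul_le_mul_right (ENNReal.rpow_le_rpow ?_ (by norm_num)) _
          exact hpart1 l hl1
  have hle : ENNReal.ofReal σ *
      (volume {x ∈ Metric.ball (0 : EuclideanSpace ℝ (Fin 3)) 1 |
        σ < |fdss lam x0 r x|}) ^ (1/3 : ℝ) ≤
      ⨆ σ ∈ Set.Ioi (0:ℝ), ENNReal.ofReal σ *
        (volume {x ∈ Metric.ball (0 : EuclideanSpace ℝ (Fin 3)) 1 |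
          σ < |fdss lam x0 r x|}) ^ (1/3 : ℝ) :=
    le_iSup₂ (f := fun (σ : ℝ) (_ : σ ∈ Set.Ioi (0:ℝ)) => ENNReal.ofReal σ *
        (volume {x ∈ Metric.ball (0 : EuclideanSpace ℝ (Fin 3)) 1 |
          σ < |fdss lam x0 r x|}) ^ (1/3 : ℝ)) σ hσpos
  exact absurd (lt_of_lt_of_le hn (le_trans hterm hle)) (lt_irrefl _)
end
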